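/- arXiv:2601.08452 — 2 statements merged into one kernel-verified Lean document; each statement's English description precedes it below -/
import Mathlib

section
/- Let a = ⌊q/2⌋ and ℓ ≥ 2. Define f₁(γ) = √(a² + γ²) and f₂(γ) = √ℓ·(a - γ) for γ ∈ [0, a). Then min{f₁(γ), f₂(γ)} is uniquely maximized over [0, a) at γ* = a(ℓ - √(2ℓ - 1))/(ℓ - 1), where f₁(γ*) = f₂(γ*). -/
/-- for `a > 0` and `ℓ ≥ 2`, the function
`γ ↦ min { √(a² + γ²), √ℓ·(a - γ) }` on `[0, a)` is uniquely maximized at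
`γ* = a(ℓ - √(2ℓ - 1))/(ℓ - 1)`, where the two terms coincide. -/
theorem stmt7 (ℓ : ℕ) (hℓ : 2 ≤ ℓ) (a : ℝ) (ha : 0 < a) :
    a * ((ℓ : ℝ) - Real.sqrt (2 * (ℓ : ℝ) - 1)) / ((ℓ : ℝ) - 1) ∈ Set.Ico 0 a ∧
    (Real.sqrt (a ^ 2 + (a * ((ℓ : ℝ) - Real.sqrt (2 * (ℓ : ℝ) - 1)) / ((ℓ : ℝ) - 1)) ^ 2)
      = Real.sqrt ℓ * (a - a * ((ℓ : ℝ) - Real.sqrt (2 * (ℓ : ℝ) - 1)) / ((ℓ : ℝ) - 1))) ∧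
    ∀ γ ∈ Set.Ico (0 : ℝ) a,
      γ ≠ a * ((ℓ : ℝ) - Real.sqrt (2 * (ℓ : ℝ) - 1)) / ((ℓ : ℝ) - 1) →
      min (Real.sqrt (a ^ 2 + γ ^ 2)) (Real.sqrt ℓ * (a - γ)) <
        min (Real.sqrt (a ^ 2 +
            (a * ((ℓ : ℝ) - Real.sqrt (2 * (ℓ : ℝ) - 1)) / ((ℓ : ℝ) - 1)) ^ 2))
          (Real.sqrt ℓ *
            (a - a * ((ℓ : ℝ) - Real.sqrt (2 * (ℓ : ℝ) - 1)) / ((ℓ : ℝ) - 1))) := by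
  set L : ℝ := (ℓ : ℝ) with hLdef
  have hL : (2 : ℝ) ≤ L := by rw [hLdef]; exact_mod_cast hℓ
  set s : ℝ := Real.sqrt (2 * L - 1) with hsdef
  have hs2 : s ^ 2 = 2 * L - 1 := Real.sq_sqrt (by linarith)
  have hsnn : 0 ≤ s := Real.sqrt_nonneg _
  have h1s : 1 < s := by nlinarith [hs2]
  have hsL : s < L := by nlinarith [hs2]
  have hL1 : (0 : ℝ) < L - 1 := by linarith
  set g : ℝ := a * (L - s) / (L - 1) with hgdef
  have hg0 : 0 ≤ g := div_nonneg (mul_nonneg ha.le (by linarith)) hL1.le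
  have hga : g < a := by
    rw [hgdef, div_lt_iff₀ hL1]
    nlinarith
  have key : a ^ 2 + g ^ 2 = L * (a - g) ^ 2 := by
    rw [hgdef]
    field_simp
    linear_combination (1-L) * hs2
  have hLpos : (0 : ℝ) < L := by linarith
  have heq : Real.sqrt (a ^ 2 + g ^ 2) = Real.sqrt L * (a - g) := by
    rw [key, Real.sqrt_mul hLpos.le, Real.sqrt_sq (by linarith : (0:ℝ) ≤ a - g)]
  refine ⟨⟨hg0, hga⟩, heq, ?_⟩
  intro γ hγ hne
  rw [heq, min_self]
  rcases lt_or_gt_of_ne hne with h | h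
  · refine lt_of_le_of_lt (min_le_left _ _) ?_
    rw [← heq]
    exact Real.sqrt_lt_sqrt (by positivity) (by nlinarith [hγ.1])
  · refine lt_of_le_of_lt (min_le_right _ _) ?_
    exact mul_lt_mul_of_pos_left (by linarith) (Real.sqrt_pos.mpr hLpos)
end

section
/- Let Λ ⊆ ℤ^ℓ be a lattice containing pℤ^ℓ, let C' = Λ ∩ {0,...,p-1}^ℓ regarded as a code in ℤ_p^ℓ, and let q ≥ p. Then the scaled code C = ⌊q/p⌋·C' ⊆ ℤ_q^ℓ has minimum toroidal distance (modulus q) at least ⌊q/p⌋ times the minimum Euclidean distance of Λ. -/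
/-- Euclidean distance between integer vectors. -/
noncomputable def eucDist {ℓ : ℕ} (v₁ v₂ : Fin ℓ → ℤ) : ℝ :=
  Real.sqrt (∑ i, ((v₁ i - v₂ i : ℤ) : ℝ) ^ 2)

/-- Toroidal distance modulus `q`: the least Euclidean norm of `v₁ - v₂ + k`
over all `k ∈ qℤ^ℓ`. -/
noncomputable def torusDist (q : ℕ) {ℓ : ℕ} (v₁ v₂ : Fin ℓ → ℤ) : ℝ :=
  sInf {r : ℝ | ∃ k : Fin ℓ → ℤ,
    r = Real.sqrt (∑ i, ((v₁ i - v₂ i + (q : ℤ) * k i : ℤ) : ℝ) ^ 2)}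

lemma key_sq (p q : ℕ) (hp : 2 ≤ p) (hq : p ≤ q) (x k : ℤ)
    (hx1 : -(p:ℤ) < x) (hx2 : x < p) :
    (((q/p : ℕ) : ℤ) * (x + p * k))^2 ≤ (((q/p : ℕ) : ℤ) * x + q * k)^2 := by
  have hm : 1 ≤ ((q/p : ℕ) : ℤ) := by
    exact_mod_cast (Nat.one_le_div_iff (by omega : 0 < p)).mpr hq
  have hr0 : 0 ≤ ((q % p : ℕ) : ℤ) := by positivity
  have hqe : (q : ℤ) = (p : ℤ) * ((q / p : ℕ) : ℤ) + ((q % p : ℕ) : ℤ) := by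
    exact_mod_cast (Nat.div_add_mod q p).symm
  set m := ((q/p:ℕ):ℤ) with hmdef
  set r := ((q%p:ℕ):ℤ) with hrdef
  have hp' : (2:ℤ) ≤ p := by exact_mod_cast hp
  have hyk : 0 ≤ (x + p * k) * k := by
    rcases lt_trichotomy k 0 with h|h|h
    · have hk1 : k ≤ -1 := by omega
      have : x + p*k ≤ -1 := by nlinarith
      nlinarith
    · simp [h]
    · have hk1 : 1 ≤ k := by omega
      have : 1 ≤ x + p*k := by nlinarith
      nlinarith
  have hrw : m * x + q * k = m * (x + p*k) + r * k := by rw [hqe]; ring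
  rw [hrw]
  nlinarith [mul_nonneg (mul_nonneg (by linarith : (0:ℤ) ≤ m) hr0) hyk, sq_nonneg (r*k)]

/-- scaling the code `C' = Λ ∩ {0, …, p-1}^ℓ` by `⌊q/p⌋` yields a
code in `ℤ_q^ℓ` whose minimum toroidal distance (modulus `q`) is at least
`⌊q/p⌋` times the minimum Euclidean distance of `Λ`. -/
theorem stmt11 (ℓ p q : ℕ) (hℓ : 1 ≤ ℓ) (hp : 2 ≤ p) (hq : p ≤ q)
    (Λ : AddSubgroup (Fin ℓ → ℤ))
    (hΛ : ∀ v : Fin ℓ → ℤ, (p : ℤ) • v ∈ Λ)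
    (d : ℝ)
    (hd : IsLeast {r : ℝ | ∃ v₁ ∈ Λ, ∃ v₂ ∈ Λ, v₁ ≠ v₂ ∧ r = eucDist v₁ v₂} d) :
    ∀ v₁ ∈ Λ, ∀ v₂ ∈ Λ,
      (∀ i, v₁ i ∈ Set.Ico (0 : ℤ) p) → (∀ i, v₂ i ∈ Set.Ico (0 : ℤ) p) →
      v₁ ≠ v₂ →
      ((q / p : ℕ) : ℝ) * d ≤
        torusDist q (fun i => ((q / p : ℕ) : ℤ) * v₁ i)
          (fun i => ((q / p : ℕ) : ℤ) * v₂ i) := by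
  intro v₁ h₁ v₂ h₂ hb₁ hb₂ hne
  obtain ⟨hdmem, hdlb⟩ := hd
  have hm0 : (0:ℝ) ≤ ((q/p:ℕ):ℝ) := by positivity
  apply le_csInf
  · exact ⟨_, 0, rfl⟩
  · rintro s ⟨k, rfl⟩
    set w : Fin ℓ → ℤ := fun i => v₂ i - p * k i with hw
    have hwΛ : w ∈ Λ := by
      have hrw : w = v₂ + (p:ℤ) • (fun i => - k i) := by
        funext i; simp [hw]; ring
      rw [hrw]; exact Λ.add_mem h₂ (hΛ _)
    have hvw : v₁ ≠ w := by
      intro h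
      apply hne
      funext i
      have h1 := hb₁ i; have h2 := hb₂ i
      simp only [Set.mem_Ico] at h1 h2
      have heq : v₁ i = v₂ i - p * k i := by rw [h]
      have hp' : (2:ℤ) ≤ p := by exact_mod_cast hp
      rcases lt_trichotomy (k i) 0 with hk|hk|hk
      · have hk1 : k i ≤ -1 := by omega
        nlinarith [h1.2, h2.1]
      · rw [heq, hk]; ring
      · have hk1 : 1 ≤ k i := by omega
        nlinarith [h1.1, h2.2]
    have hsum : (((q/p:ℕ):ℝ))^2 * (∑ i, ((v₁ i - w i : ℤ) : ℝ)^2)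
        ≤ ∑ i, ((((q/p:ℕ):ℤ) * v₁ i - ((q/p:ℕ):ℤ) * v₂ i + (q:ℤ) * k i : ℤ) : ℝ)^2 := by
      rw [Finset.mul_sum]
      apply Finset.sum_le_sum
      intro i _
      have h1 := hb₁ i; have h2 := hb₂ i
      simp only [Set.mem_Ico] at h1 h2
      have hk := key_sq p q hp hq (v₁ i - v₂ i) (k i) (by omega) (by omega)
      have hzi : (((q/p:ℕ):ℤ) * (v₁ i - w i))^2
          ≤ (((q/p:ℕ):ℤ) * v₁ i - ((q/p:ℕ):ℤ) * v₂ i + q * k i)^2 := by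
        have hwi : v₁ i - w i = (v₁ i - v₂ i) + p * k i := by simp [hw]; ring
        rw [hwi]
        calc (((q/p:ℕ):ℤ) * ((v₁ i - v₂ i) + p * k i))^2
            ≤ (((q/p:ℕ):ℤ) * (v₁ i - v₂ i) + q * k i)^2 := hk
          _ = _ := by ring
      rw [mul_pow] at hzi
      have hR : (((((q/p:ℕ):ℤ)):ℝ))^2 * ((v₁ i - w i : ℤ):ℝ)^2
          ≤ (((((q/p:ℕ):ℤ) * v₁ i - ((q/p:ℕ):ℤ) * v₂ i + (q:ℤ) * k i : ℤ)):ℝ)^2 := by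
        exact_mod_cast hzi
      rw [Int.cast_natCast] at hR
      simpa using hR
    have hdw : d ≤ eucDist v₁ w := hdlb ⟨v₁, h₁, w, hwΛ, hvw, rfl⟩
    have hle : ((q/p:ℕ):ℝ) * eucDist v₁ w
        ≤ Real.sqrt (∑ i, ((((q/p:ℕ):ℤ) * v₁ i - ((q/p:ℕ):ℤ) * v₂ i + (q:ℤ) * k i : ℤ) : ℝ)^2) := by
      rw [eucDist, ← Real.sqrt_sq hm0, ← Real.sqrt_mul (by positivity)]
      exact Real.sqrt_le_sqrt hsum
    calc ((q/p:ℕ):ℝ) * d ≤ ((q/p:ℕ):ℝ) * eucDist v₁ w :=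
          mul_le_mul_of_nonneg_left hdw hm0
      _ ≤ _ := hle
end
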